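/- Let M : [0,∞) → ℝ^{n×n} be C¹ with M(t) symmetric for all t, let C : [0,∞) → ℝ^{n×n} be such that d/dt M(t) − 2C(t) is skew-symmetric for every t, let K ∈ ℝ^{n×n}, let Γ ∈ ℝ^{p×p} be symmetric and invertible, and let Y : [0,∞) → ℝ^{n×p}. Suppose s : [0,∞) → ℝ^n and θ̃ : [0,∞) → ℝ^p are differentiable and satisfy M(t)s'(t) = −C(t)s(t) − K s(t) + Y(t)θ̃(t) and θ̃'(t) = −Γ Y(t)^T s(t) for all t ≥ 0. Then the function V(t) = ½( s(t)^T M(t) s(t) + θ̃(t)^T Γ^{-1} θ̃(t) ) is differentiable with V'(t) = −s(t)^T K s(t) for all t ≥ 0. -/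

import Mathlib

open Matrix


lemma hasDerivAt_dot {n : ℕ} {f g : ℝ → Fin n → ℝ} {f' g' : Fin n → ℝ} {t : ℝ}
    (hf : ∀ i, HasDerivAt (fun u => f u i) (f' i) t)
    (hg : ∀ i, HasDerivAt (fun u => g u i) (g' i) t) :
    HasDerivAt (fun u => f u ⬝ᵥ g u) (f' ⬝ᵥ g t + f t ⬝ᵥ g') t := by
  simp only [dotProduct]
  rw [← Finset.sum_add_distrib]
  exact HasDerivAt.fun_sum fun i _ => (hf i).mul (hg i)

lemma hasDerivAt_quad {n m : ℕ} {f : ℝ → Fin n → ℝ} {g : ℝ → Fin m → ℝ}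
    {f' : Fin n → ℝ} {g' : Fin m → ℝ}
    {A A' : ℝ → Matrix (Fin n) (Fin m) ℝ} {t : ℝ}
    (hf : HasDerivAt f f' t) (hg : HasDerivAt g g' t)
    (hA : ∀ i j, HasDerivAt (fun u => A u i j) (A' t i j) t) :
    HasDerivAt (fun u => f u ⬝ᵥ (A u).mulVec (g u))
      (f' ⬝ᵥ (A t).mulVec (g t) + f t ⬝ᵥ (A' t).mulVec (g t)
        + f t ⬝ᵥ (A t).mulVec g') t := by
  have hfc := hasDerivAt_pi.1 hf
  have hgc := hasDerivAt_pi.1 hg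
  have hAg : ∀ i, HasDerivAt (fun u => ((A u).mulVec (g u)) i)
      ((A' t).mulVec (g t) i + (A t).mulVec g' i) t := by
    intro i
    exact hasDerivAt_dot (fun j => hA i j) hgc
  have := hasDerivAt_dot (f := f) (g := fun u => (A u).mulVec (g u))
    (f' := f') (g' := fun i => (A' t).mulVec (g t) i + (A t).mulVec g' i) hfc hAg
  convert this using 1
  rw [add_assoc]
  congr 1
  rw [← dotProduct_add]
  rfl

/-- Lyapunov derivative computation for the adaptive Euler–Lagrange error
dynamics: with `M(t)` symmetric and `C¹`, `Ṁ − 2C` skew-symmetric, `Γ` symmetric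
invertible, and `s`, `θ̃` differentiable with `M s' = −Cs − Ks + Yθ̃`, `θ̃' = −ΓYᵀs`,
the function `V = ½(sᵀ M s + θ̃ᵀ Γ⁻¹ θ̃)` satisfies `V' = −sᵀ K s` for all `t ≥ 0`. -/
theorem stmt_17 (n p : ℕ)
    (M M' : ℝ → Matrix (Fin n) (Fin n) ℝ)
    (hM' : ∀ t, 0 ≤ t → ∀ i j, HasDerivAt (fun u => M u i j) (M' t i j) t)
    (hMsymm : ∀ t, (M t).IsSymm)
    (C : ℝ → Matrix (Fin n) (Fin n) ℝ)
    (hskew : ∀ t, 0 ≤ t →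
      (M' t - (2 : ℝ) • C t)ᵀ = -(M' t - (2 : ℝ) • C t))
    (K : Matrix (Fin n) (Fin n) ℝ)
    (Γ : Matrix (Fin p) (Fin p) ℝ) (hΓs : Γ.IsSymm) (hΓu : IsUnit Γ)
    (Y : ℝ → Matrix (Fin n) (Fin p) ℝ)
    (s s' : ℝ → Fin n → ℝ) (θ θ' : ℝ → Fin p → ℝ)
    (hs : ∀ t, 0 ≤ t → HasDerivAt s (s' t) t)
    (hθ : ∀ t, 0 ≤ t → HasDerivAt θ (θ' t) t)
    (heq1 : ∀ t, 0 ≤ t →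
      (M t).mulVec (s' t) = -(C t).mulVec (s t) - K.mulVec (s t) + (Y t).mulVec (θ t))
    (heq2 : ∀ t, 0 ≤ t → θ' t = -(Γ.mulVec ((Y t)ᵀ.mulVec (s t)))) :
    ∀ t, 0 ≤ t →
      HasDerivAt
        (fun u => (1 / 2 : ℝ) * (s u ⬝ᵥ (M u).mulVec (s u) + θ u ⬝ᵥ Γ⁻¹.mulVec (θ u)))
        (-(s t ⬝ᵥ K.mulVec (s t))) t := by
  intro t ht
  have hq1 := hasDerivAt_quad (A := M) (A' := M') (hs t ht) (hs t ht) (hM' t ht)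
  have hq2 := hasDerivAt_quad (A := fun _ => Γ⁻¹) (A' := fun _ => 0)
    (hθ t ht) (hθ t ht) (fun i j => hasDerivAt_const t (Γ⁻¹ i j))
  have hD := (hq1.add hq2).const_mul (1/2 : ℝ)
  refine hD.congr_deriv ?_
  -- symmetry of M
  have hMs : s' t ⬝ᵥ (M t).mulVec (s t) = s t ⬝ᵥ (M t).mulVec (s' t) := by
    rw [dotProduct_mulVec (s t), ← Matrix.mulVec_transpose, (hMsymm t).eq,
      dotProduct_comm]
  -- Γ⁻¹ symmetric
  have hΓis : Γ⁻¹ᵀ = Γ⁻¹ := by rw [Matrix.transpose_nonsing_inv, hΓs.eq]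
  have hΓsym : θ' t ⬝ᵥ Γ⁻¹.mulVec (θ t) = θ t ⬝ᵥ Γ⁻¹.mulVec (θ' t) := by
    rw [dotProduct_mulVec (θ t), ← Matrix.mulVec_transpose, hΓis, dotProduct_comm]
  -- skew part
  have hsk : s t ⬝ᵥ (M' t).mulVec (s t) = 2 * (s t ⬝ᵥ (C t).mulVec (s t)) := by
    have h0 : s t ⬝ᵥ (M' t - (2:ℝ) • C t).mulVec (s t) = 0 := by
      have := hskew t ht
      have h := dotProduct_mulVec (s t) (M' t - (2:ℝ) • C t) (s t)
      rw [← Matrix.mulVec_transpose, this] at h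
      rw [Matrix.neg_mulVec, neg_dotProduct, dotProduct_comm ((M' t - (2:ℝ) • C t) *ᵥ s t) (s t)] at h
      linarith
    rw [Matrix.sub_mulVec, dotProduct_sub, Matrix.smul_mulVec,
      dotProduct_smul] at h0
    simp at h0
    linarith
  -- eq1 substitution
  have h1 : s t ⬝ᵥ (M t).mulVec (s' t)
      = -(s t ⬝ᵥ (C t).mulVec (s t)) - s t ⬝ᵥ K.mulVec (s t)
        + s t ⬝ᵥ (Y t).mulVec (θ t) := by
    rw [heq1 t ht, dotProduct_add, dotProduct_sub, dotProduct_neg]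
  -- eq2 substitution
  have h2 : θ t ⬝ᵥ Γ⁻¹.mulVec (θ' t) = -(s t ⬝ᵥ (Y t).mulVec (θ t)) := by
    rw [heq2 t ht, Matrix.mulVec_neg, Matrix.mulVec_mulVec,
      Matrix.nonsing_inv_mul Γ ((Matrix.isUnit_iff_isUnit_det Γ).1 hΓu),
      Matrix.one_mulVec, dotProduct_neg, dotProduct_mulVec,
      ← Matrix.mulVec_transpose, Matrix.transpose_transpose, dotProduct_comm]
  simp only [Matrix.zero_mulVec, dotProduct_zero]
  rw [hMs, hΓsym, hsk, h1, h2]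
  ring
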